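/- If Q is an orthodiagonal convex quadrilateral in ℝ², then the midpoint quadrilateral Q_M is cyclic. Furthermore, if Q is also cyclic and C₀ and EP denote the centers of the circles circumscribed about Q_M and about Q, respectively, then C₀ = (EP + IP)/2, where IP is the intersection point of the diagonals of Q. -/

import Mathlib

open Set

noncomputable section

/-- Points of the ellipse with foci `f₁`, `f₂` and major-axis length `2*a`. -/
def EllipseSet (f₁ f₂ : ℂ) (a : ℝ) : Set ℂ := {z : ℂ | dist z f₁ + dist z f₂ = 2 * a}

/-- `E` is the (possibly circular) ellipse with foci `f₁, f₂` and semi-major axis `a`.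
It is a circle precisely when `f₁ = f₂`. -/
def IsEllipse (E : Set ℂ) (f₁ f₂ : ℂ) (a : ℝ) : Prop :=
  dist f₁ f₂ < 2 * a ∧ E = EllipseSet f₁ f₂ a

/-- The full line through `P` and `Q`. -/
def LineThrough (P Q : ℂ) : Set ℂ := {z : ℂ | ∃ θ : ℝ, z = P + θ • (Q - P)}

/-- `E` is tangent to the side `[P,Q]` at `ζ`: the line through `P` and `Q` meets `E`
in the single point `ζ`, which lies on the closed segment `[P,Q]`. -/
def TangentToSideAt (E : Set ℂ) (P Q ζ : ℂ) : Prop :=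
  ζ ∈ segment ℝ P Q ∧ E ∩ LineThrough P Q = {ζ}

/-- `E` is tangent to the side `[P,Q]`. -/
def TangentToSide (E : Set ℂ) (P Q : ℂ) : Prop := ∃ ζ, TangentToSideAt E P Q ζ

/-- A curve `E` is inscribed in the quadrilateral `A₁A₂A₃A₄` (vertices in order)
if it is tangent to each of the four sides. -/
def InscribedInQuad (E : Set ℂ) (A₁ A₂ A₃ A₄ : ℂ) : Prop :=
  TangentToSide E A₁ A₂ ∧ TangentToSide E A₂ A₃ ∧
    TangentToSide E A₃ A₄ ∧ TangentToSide E A₄ A₁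

/-- `A₁A₂A₃A₄` is a convex quadrilateral with the vertices listed in cyclic order:
the four points are in convex position and the diagonals `A₁A₃`, `A₂A₄` meet. -/
def IsConvexQuad (A₁ A₂ A₃ A₄ : ℂ) : Prop :=
  A₁ ∉ convexHull ℝ ({A₂, A₃, A₄} : Set ℂ) ∧
  A₂ ∉ convexHull ℝ ({A₁, A₃, A₄} : Set ℂ) ∧
  A₃ ∉ convexHull ℝ ({A₁, A₂, A₄} : Set ℂ) ∧
  A₄ ∉ convexHull ℝ ({A₁, A₂, A₃} : Set ℂ) ∧
  (segment ℝ A₁ A₃ ∩ segment ℝ A₂ A₄).Nonempty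

def IsParallelogram (A₁ A₂ A₃ A₄ : ℂ) : Prop := A₁ + A₃ = A₂ + A₄

/-- The diagonals `A₁A₃` and `A₂A₄` are perpendicular. -/
def Orthodiagonal (A₁ A₂ A₃ A₄ : ℂ) : Prop :=
  (A₃ - A₁).re * (A₄ - A₂).re + (A₃ - A₁).im * (A₄ - A₂).im = 0

/-- `P` is equidistant from the four points (the circumcenter, when they are concyclic). -/
def IsCircCenter (P A₁ A₂ A₃ A₄ : ℂ) : Prop :=
  dist P A₁ = dist P A₂ ∧ dist P A₂ = dist P A₃ ∧ dist P A₃ = dist P A₄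

/-- `P` is the intersection point of the diagonals `A₁A₃` and `A₂A₄`. -/
def IsDiagPoint (P A₁ A₂ A₃ A₄ : ℂ) : Prop :=
  P ∈ segment ℝ A₁ A₃ ∧ P ∈ segment ℝ A₂ A₄

/-- The plane vectors `z` and `w` are parallel. -/
def Para (z w : ℂ) : Prop := z.re * w.im = z.im * w.re

/-- The quadrilateral `A₁A₂A₃A₄` has (at least) one pair of parallel opposite sides. -/
def IsTrapezoid (A₁ A₂ A₃ A₄ : ℂ) : Prop :=
  Para (A₂ - A₁) (A₄ - A₃) ∨ Para (A₃ - A₂) (A₁ - A₄)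

/-- If a convex quadrilateral is orthodiagonal then its midpoint
quadrilateral `Q_M` is cyclic; moreover, if the quadrilateral is also cyclic with
circumcenter `EP`, and `C₀` is the circumcenter of `Q_M`, then `C₀ = (EP + IP)/2`. -/
lemma normSq_of_dist_eq {a b c d : ℂ} (h : dist a b = dist c d) :
    Complex.normSq (a - b) = Complex.normSq (c - d) := by
  rw [Complex.dist_eq, Complex.dist_eq] at h
  rw [← Complex.sq_norm, ← Complex.sq_norm, h]

lemma abs_add_eq_abs_sub {u v : ℂ} (h : u.re * v.re + u.im * v.im = 0) :
    ‖u + v‖ = ‖u - v‖ := by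
  rw [Complex.norm_def, Complex.norm_def]
  congr 1
  simp only [Complex.normSq_apply, Complex.add_re, Complex.add_im, Complex.sub_re,
    Complex.sub_im]
  linear_combination 4 * h

theorem orthodiagonal_midpoint_quad
    (A₁ A₂ A₃ A₄ : ℂ)
    (hconv : IsConvexQuad A₁ A₂ A₃ A₄)
    (horth : Orthodiagonal A₁ A₂ A₃ A₄) :
    (∃ c : ℂ, IsCircCenter c ((A₁ + A₂) / 2) ((A₂ + A₃) / 2) ((A₃ + A₄) / 2) ((A₄ + A₁) / 2)) ∧
    (∀ EP IP C₀ : ℂ, IsCircCenter EP A₁ A₂ A₃ A₄ → IsDiagPoint IP A₁ A₂ A₃ A₄ →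
      IsCircCenter C₀ ((A₁ + A₂) / 2) ((A₂ + A₃) / 2) ((A₃ + A₄) / 2) ((A₄ + A₁) / 2) →
      C₀ = (EP + IP) / 2) := by
  have horth' : (A₃.re - A₁.re) * (A₄.re - A₂.re) + (A₃.im - A₁.im) * (A₄.im - A₂.im) = 0 := by
    simpa [Orthodiagonal, Complex.sub_re, Complex.sub_im] using horth
  -- nondegeneracy of the diagonals
  have hu : A₃ ≠ A₁ := by
    intro h
    exact hconv.2.2.1 (subset_convexHull ℝ _ (by simp [h]))
  have hv : A₄ ≠ A₂ := by
    intro h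
    exact hconv.2.2.2.1 (subset_convexHull ℝ _ (by simp [h]))
  have hupos : 0 < Complex.normSq (A₃ - A₁) := Complex.normSq_pos.mpr (sub_ne_zero.mpr hu)
  have hvpos : 0 < Complex.normSq (A₄ - A₂) := Complex.normSq_pos.mpr (sub_ne_zero.mpr hv)
  have hupos' : 0 < (A₃.re - A₁.re) * (A₃.re - A₁.re) + (A₃.im - A₁.im) * (A₃.im - A₁.im) := by
    simpa [Complex.normSq_apply, Complex.sub_re, Complex.sub_im] using hupos
  have hvpos' : 0 < (A₄.re - A₂.re) * (A₄.re - A₂.re) + (A₄.im - A₂.im) * (A₄.im - A₂.im) := by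
    simpa [Complex.normSq_apply, Complex.sub_re, Complex.sub_im] using hvpos
  have hw : (A₃.re - A₁.re) * (A₄.im - A₂.im) - (A₃.im - A₁.im) * (A₄.re - A₂.re) ≠ 0 := by
    intro h
    nlinarith [horth', h, hupos', hvpos', sq_nonneg ((A₃.re - A₁.re) * (A₄.im - A₂.im))]
  constructor
  · refine ⟨(A₁ + A₂ + A₃ + A₄) / 4, ?_, ?_, ?_⟩
    · rw [Complex.dist_eq, Complex.dist_eq,
        show (A₁ + A₂ + A₃ + A₄) / 4 - (A₁ + A₂) / 2 = ((A₃ - A₁) + (A₄ - A₂)) / 4 by ring,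
        show (A₁ + A₂ + A₃ + A₄) / 4 - (A₂ + A₃) / 2 = -(((A₃ - A₁) - (A₄ - A₂))) / 4 by ring,
        norm_div, norm_div, norm_neg]
      rw [abs_add_eq_abs_sub horth]
    · rw [Complex.dist_eq, Complex.dist_eq,
        show (A₁ + A₂ + A₃ + A₄) / 4 - (A₂ + A₃) / 2 = -(((A₃ - A₁) - (A₄ - A₂))) / 4 by ring,
        show (A₁ + A₂ + A₃ + A₄) / 4 - (A₃ + A₄) / 2 = -(((A₃ - A₁) + (A₄ - A₂))) / 4 by ring,
        norm_div, norm_div, norm_neg, norm_neg]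
      rw [abs_add_eq_abs_sub horth]
    · rw [Complex.dist_eq, Complex.dist_eq,
        show (A₁ + A₂ + A₃ + A₄) / 4 - (A₃ + A₄) / 2 = -(((A₃ - A₁) + (A₄ - A₂))) / 4 by ring,
        show (A₁ + A₂ + A₃ + A₄) / 4 - (A₄ + A₁) / 2 = ((A₃ - A₁) - (A₄ - A₂)) / 4 by ring,
        norm_div, norm_div, norm_neg]
      rw [abs_add_eq_abs_sub horth]
  · rintro EP IP C₀ hEP ⟨hIP1, hIP2⟩ hC₀
    -- diagonal point parametrizations
    rw [segment_eq_image'] at hIP1 hIP2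
    obtain ⟨θ, -, hθ⟩ := hIP1
    obtain ⟨φ, -, hφ⟩ := hIP2
    have hx1 : IP.re = A₁.re + θ * (A₃.re - A₁.re) := by
      rw [← hθ]; simp [Complex.add_re, Complex.smul_re, Complex.sub_re]
    have hy1 : IP.im = A₁.im + θ * (A₃.im - A₁.im) := by
      rw [← hθ]; simp [Complex.add_im, Complex.smul_im, Complex.sub_im]
    have hx2 : IP.re = A₂.re + φ * (A₄.re - A₂.re) := by
      rw [← hφ]; simp [Complex.add_re, Complex.smul_re, Complex.sub_re]
    have hy2 : IP.im = A₂.im + φ * (A₄.im - A₂.im) := by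
      rw [← hφ]; simp [Complex.add_im, Complex.smul_im, Complex.sub_im]
    -- circumcenter equations for the original quadrilateral
    have h13 := normSq_of_dist_eq (hEP.1.trans hEP.2.1)
    have h24 := normSq_of_dist_eq (hEP.2.1.trans hEP.2.2)
    simp only [Complex.normSq_apply, Complex.sub_re, Complex.sub_im] at h13 h24
    -- circumcenter equations for the midpoint quadrilateral
    have hq1 := normSq_of_dist_eq (hC₀.1.trans hC₀.2.1)
    have hq2 := normSq_of_dist_eq (hC₀.2.1.trans hC₀.2.2)
    rw [show C₀ - (A₁ + A₂) / 2 = (C₀ + C₀ - A₁ - A₂) / 2 by ring,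
      show C₀ - (A₃ + A₄) / 2 = (C₀ + C₀ - A₃ - A₄) / 2 by ring,
      Complex.normSq_div, Complex.normSq_div] at hq1
    rw [show C₀ - (A₂ + A₃) / 2 = (C₀ + C₀ - A₂ - A₃) / 2 by ring,
      show C₀ - (A₄ + A₁) / 2 = (C₀ + C₀ - A₄ - A₁) / 2 by ring,
      Complex.normSq_div, Complex.normSq_div] at hq2
    have h2ne : Complex.normSq 2 ≠ 0 := by norm_num [Complex.normSq_apply]
    rw [div_eq_div_iff h2ne h2ne, mul_left_inj' h2ne] at hq1 hq2
    simp only [Complex.normSq_apply, Complex.sub_re, Complex.sub_im, Complex.add_re,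
      Complex.add_im] at hq1 hq2
    -- linear consequences
    have G1 : ((A₃.re - A₁.re) + (A₄.re - A₂.re)) * (4 * C₀.re - (A₁.re + A₂.re + A₃.re + A₄.re))
        + ((A₃.im - A₁.im) + (A₄.im - A₂.im)) * (4 * C₀.im - (A₁.im + A₂.im + A₃.im + A₄.im))
        = 0 := by linear_combination hq1
    have G2 : ((A₄.re - A₂.re) - (A₃.re - A₁.re)) * (4 * C₀.re - (A₁.re + A₂.re + A₃.re + A₄.re))
        + ((A₄.im - A₂.im) - (A₃.im - A₁.im)) * (4 * C₀.im - (A₁.im + A₂.im + A₃.im + A₄.im))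
        = 0 := by linear_combination hq2
    have hue : (A₃.re - A₁.re) * (4 * C₀.re - (A₁.re + A₂.re + A₃.re + A₄.re))
        + (A₃.im - A₁.im) * (4 * C₀.im - (A₁.im + A₂.im + A₃.im + A₄.im)) = 0 := by
      linear_combination (G1 - G2) / 2
    have hve : (A₄.re - A₂.re) * (4 * C₀.re - (A₁.re + A₂.re + A₃.re + A₄.re))
        + (A₄.im - A₂.im) * (4 * C₀.im - (A₁.im + A₂.im + A₃.im + A₄.im)) = 0 := by
      linear_combination (G1 + G2) / 2
    have hEr : 4 * C₀.re - (A₁.re + A₂.re + A₃.re + A₄.re) = 0 := by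
      have h := mul_eq_zero.mp (show ((A₃.re - A₁.re) * (A₄.im - A₂.im)
          - (A₃.im - A₁.im) * (A₄.re - A₂.re))
          * (4 * C₀.re - (A₁.re + A₂.re + A₃.re + A₄.re)) = 0 by
        linear_combination (A₄.im - A₂.im) * hue - (A₃.im - A₁.im) * hve)
      exact h.resolve_left hw
    have hEi : 4 * C₀.im - (A₁.im + A₂.im + A₃.im + A₄.im) = 0 := by
      have h := mul_eq_zero.mp (show ((A₃.re - A₁.re) * (A₄.im - A₂.im)
          - (A₃.im - A₁.im) * (A₄.re - A₂.re))
          * (4 * C₀.im - (A₁.im + A₂.im + A₃.im + A₄.im)) = 0 by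
        linear_combination (A₃.re - A₁.re) * hve - (A₄.re - A₂.re) * hue)
      exact h.resolve_left hw
    -- EP + IP facts
    have R1 : (A₃.re - A₁.re) * (2 * EP.re - A₁.re - A₃.re)
        + (A₃.im - A₁.im) * (2 * EP.im - A₁.im - A₃.im) = 0 := by
      linear_combination h13
    have R2 : (A₄.re - A₂.re) * (2 * EP.re - A₂.re - A₄.re)
        + (A₄.im - A₂.im) * (2 * EP.im - A₂.im - A₄.im) = 0 := by
      linear_combination h24
    have hvd : (A₄.re - A₂.re) * (2 * IP.re + 2 * EP.re - (A₁.re + A₂.re + A₃.re + A₄.re))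
        + (A₄.im - A₂.im) * (2 * IP.im + 2 * EP.im - (A₁.im + A₂.im + A₃.im + A₄.im)) = 0 := by
      linear_combination R2 + (2 * θ - 1) * horth' + 2 * (A₄.re - A₂.re) * hx1
        + 2 * (A₄.im - A₂.im) * hy1
    have hud : (A₃.re - A₁.re) * (2 * IP.re + 2 * EP.re - (A₁.re + A₂.re + A₃.re + A₄.re))
        + (A₃.im - A₁.im) * (2 * IP.im + 2 * EP.im - (A₁.im + A₂.im + A₃.im + A₄.im)) = 0 := by
      linear_combination R1 + (2 * φ - 1) * horth' + 2 * (A₃.re - A₁.re) * hx2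
        + 2 * (A₃.im - A₁.im) * hy2
    have hDr : 2 * IP.re + 2 * EP.re - (A₁.re + A₂.re + A₃.re + A₄.re) = 0 := by
      have h := mul_eq_zero.mp (show ((A₃.re - A₁.re) * (A₄.im - A₂.im)
          - (A₃.im - A₁.im) * (A₄.re - A₂.re))
          * (2 * IP.re + 2 * EP.re - (A₁.re + A₂.re + A₃.re + A₄.re)) = 0 by
        linear_combination (A₄.im - A₂.im) * hud - (A₃.im - A₁.im) * hvd)
      exact h.resolve_left hw
    have hDi : 2 * IP.im + 2 * EP.im - (A₁.im + A₂.im + A₃.im + A₄.im) = 0 := by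
      have h := mul_eq_zero.mp (show ((A₃.re - A₁.re) * (A₄.im - A₂.im)
          - (A₃.im - A₁.im) * (A₄.re - A₂.re))
          * (2 * IP.im + 2 * EP.im - (A₁.im + A₂.im + A₃.im + A₄.im)) = 0 by
        linear_combination (A₃.re - A₁.re) * hvd - (A₄.re - A₂.re) * hud)
      exact h.resolve_left hw
    rw [eq_div_iff (two_ne_zero' ℂ)]
    apply Complex.ext
    · simp only [Complex.mul_re, Complex.add_re]
      norm_num
      linarith
    · simp only [Complex.mul_im, Complex.add_im]
      norm_num
      linarith
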